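/- arXiv:1210.2462 — 4 statements merged into one kernel-verified Lean document; each statement's English description precedes it below -/
import Mathlib

section
/- If a language L ⊆ Σ* is accepted by an automaton with advice having state set Q, then for every n the restriction of the Myhill-Nerode congruence ≡_L to strings of length exactly n has at most |Q| equivalence classes. -/
open Classical

/-- The run of an automaton with advice. -/
def advRun {Q S Γ : Type*} (δ : Q → Γ → S → Q) (A : ℕ → Γ) : Q → ℕ → List S → Q
  | q, _, [] => q
  | q, n, a :: w => advRun δ A (δ q (A n) a) (n + 1) w

/-- The language accepted by an automaton with advice. -/
def advAccepts {Q S Γ : Type*} (δ : Q → Γ → S → Q) (A : ℕ → Γ) (q0 : Q) (F : Set Q) :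
    Set (List S) :=
  {w | advRun δ A q0 0 w ∈ F}

/-- The Myhill-Nerode congruence of a language `L`. -/
def NerodeEq {S : Type*} (L : Set (List S)) (x y : List S) : Prop :=
  ∀ z : List S, x ++ z ∈ L ↔ y ++ z ∈ L

lemma advRun_append {Q S Γ : Type*} (δ : Q → Γ → S → Q) (A : ℕ → Γ) :
    ∀ (w z : List S) (q : Q) (m : ℕ),
      advRun δ A q m (w ++ z) = advRun δ A (advRun δ A q m w) (m + w.length) z := by
  intro w
  induction w with
  | nil => intro z q m; simp [advRun]
  | cons a w ih =>
      intro z q m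
      simp only [List.cons_append, advRun, List.length_cons]
      rw [ih]
      congr 1
      omega

/-- If `L` is accepted by an automaton with advice having state set `Q`, then for
every `n`, the Myhill-Nerode congruence restricted to strings of length `n`
has at most `|Q|` equivalence classes. -/
theorem nerode_classes_le_card_states {S Γ Q : Type*} [Fintype Q]
    (δ : Q → Γ → S → Q) (A : ℕ → Γ) (q0 : Q) (F : Set Q) (L : Set (List S))
    (hacc : advAccepts δ A q0 F = L) (n : ℕ) :
    ∃ R : Finset (List S), R.card ≤ Fintype.card Q ∧
      (∀ y ∈ R, y.length = n) ∧
      ∀ x : List S, x.length = n → ∃ y ∈ R, NerodeEq L x y := by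
  classical
  set f : List S → Q := fun x => advRun δ A q0 0 x with hf
  set P : Q → Prop := fun q => ∃ x : List S, x.length = n ∧ f x = q with hP
  set rep : Q → List S := fun q =>
    if h : P q then Classical.choose h else [] with hrep
  refine ⟨Finset.image rep (Finset.univ.filter P), ?_, ?_, ?_⟩
  · exact le_trans (Finset.card_image_le) (le_trans (Finset.card_filter_le _ _)
      (le_of_eq (Finset.card_univ)))
  · intro y hy
    rcases Finset.mem_image.mp hy with ⟨q, hq, hqy⟩
    have hPq : P q := (Finset.mem_filter.mp hq).2
    have : rep q = Classical.choose hPq := by simp [hrep, hPq]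
    rw [← hqy, this]
    exact (Classical.choose_spec hPq).1
  · intro x hx
    have hPx : P (f x) := ⟨x, hx, rfl⟩
    refine ⟨rep (f x), Finset.mem_image.mpr ⟨f x, Finset.mem_filter.mpr ⟨Finset.mem_univ _, hPx⟩, rfl⟩, ?_⟩
    have hrepfx : rep (f x) = Classical.choose hPx := by simp [hrep, hPx]
    obtain ⟨hlen, hfeq⟩ := Classical.choose_spec hPx
    intro z
    rw [← hacc]
    show advRun δ A q0 0 (x ++ z) ∈ F ↔ advRun δ A q0 0 (rep (f x) ++ z) ∈ F
    rw [advRun_append, advRun_append, hrepfx]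
    rw [hlen, hx]
    show advRun δ A (f x) (0 + n) z ∈ F ↔ advRun δ A (f (Classical.choose hPx)) (0 + n) z ∈ F
    rw [hfeq]
end

section
/- If an automaton M with advice A accepts exactly the language Pref(A) of finite prefixes of A, where the states reachable on prefixes of A have been normalized, then there is a deterministic transducer M* with the same states such that M*[B] reads any infinite string B over the input alphabet of M's advice and outputs an infinite string, and M*[A] = A when A is the advice. More precisely: from M one can construct a deterministic transducer M* with M*[A's advice tape] equal to A. -/
open Classical

/-- State of a deterministic transducer after `n` steps: `t` maps (state, input
character) to (next state, output character). -/
def transRun {Q Γ S : Type*} (t : Q → Γ → Q × S) (q : Q) (B : ℕ → Γ) : ℕ → Q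
  | 0 => q
  | n + 1 => (t (transRun t q B n) (B n)).1

/-- The `n`-th output character of the transducer on infinite input `B`. -/
def transOut {Q Γ S : Type*} (t : Q → Γ → Q × S) (q : Q) (B : ℕ → Γ) (n : ℕ) : S :=
  (t (transRun t q B n) (B n)).2

/-- The set of finite prefixes of the infinite string `A`. -/
def Pref {S : Type*} (A : ℕ → S) : Set (List S) :=
  {w | ∀ i : Fin w.length, w.get i = A i}

lemma advRun_append_singleton {Q S Γ : Type*} (δ : Q → Γ → S → Q) (B : ℕ → Γ) :
    ∀ (w : List S) (q : Q) (n : ℕ) (a : S),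
      advRun δ B q n (w ++ [a]) = δ (advRun δ B q n w) (B (n + w.length)) a := by
  intro w
  induction w with
  | nil => intro q n a; simp [advRun]
  | cons x w ih =>
      intro q n a
      simp only [List.cons_append, advRun, ih, List.length_cons]
      rw [show n + (w.length + 1) = n + 1 + w.length by omega]

lemma ofFn_mem_pref {S : Type*} (A : ℕ → S) (n : ℕ) :
    (List.ofFn (fun i : Fin n => A i)) ∈ Pref A := by
  intro i
  simp [List.get_ofFn]

/-- From a normalized automaton `M` accepting `Pref A` with advice `B`, one can
construct a deterministic transducer `M*` on the same state set `Q` with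
`M*[B] = A`. -/
theorem automaton_for_pref_to_transducer {Q S Γ : Type*} [Fintype Q]
    (δ : Q → Γ → S → Q) (B : ℕ → Γ) (q0 : Q) (F : Set Q) (A : ℕ → S)
    (hacc : advAccepts δ B q0 F = Pref A)
    (hnorm : ∀ q ∈ F, ∀ b : Γ, ∃! a : S, δ q b a ∈ F) :
    ∃ t : Q → Γ → Q × S, (∀ q b, (t q b).1 = δ q b (t q b).2) ∧
      ∀ n : ℕ, transOut t q0 B n = A n := by
  -- q0 ∈ F since [] ∈ Pref A
  have hq0 : q0 ∈ F := by
    have : ([] : List S) ∈ advAccepts δ B q0 F := by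
      rw [hacc]; intro i; exact absurd i.2 (by simp)
    exact this
  set w : ℕ → List S := fun n => List.ofFn (fun i : Fin n => A i) with hw
  have hwlen : ∀ n, (w n).length = n := by intro n; simp [hw]
  -- the canonical run states
  have hmem : ∀ n, advRun δ B q0 0 (w n) ∈ F := by
    intro n
    have : w n ∈ advAccepts δ B q0 F := by rw [hacc]; exact ofFn_mem_pref A n
    exact this
  -- define the transducer
  classical
  let c : Γ → S := fun b => (hnorm q0 hq0 b).choose
  let t : Q → Γ → Q × S := fun q b =>
    if h : q ∈ F then (δ q b (hnorm q h b).choose, (hnorm q h b).choose)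
    else (δ q b (c b), c b)
  refine ⟨t, ?_, ?_⟩
  · intro q b
    by_cases h : q ∈ F <;> simp [t, h]
  · have hwsucc : ∀ n, w (n + 1) = w n ++ [A n] := by
      intro n
      show List.ofFn (fun i : Fin (n + 1) => A i) = _
      rw [List.ofFn_succ']
      simp [List.concat_eq_append, Function.comp, Fin.last]
      rfl
    have step : ∀ n, t (advRun δ B q0 0 (w n)) (B n) =
        (advRun δ B q0 0 (w (n + 1)), A n) := by
      intro n
      have hqF := hmem n
      have hrun : advRun δ B q0 0 (w (n + 1)) = δ (advRun δ B q0 0 (w n)) (B n) (A n) := by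
        rw [hwsucc n, advRun_append_singleton]
        simp [hwlen]
      have hAn : δ (advRun δ B q0 0 (w n)) (B n) (A n) ∈ F := by
        rw [← hrun]; exact hmem (n + 1)
      have hch := (hnorm _ hqF (B n)).choose_spec
      have hce : (hnorm _ hqF (B n)).choose = A n :=
        (hnorm _ hqF (B n)).unique hch.1 (by simpa using hAn)
      simp only [t, dif_pos hqF, hce, hrun]
    have key : ∀ n, transRun t q0 B n = advRun δ B q0 0 (w n) := by
      intro n
      induction n with
      | zero => simp [transRun, hw, advRun]
      | succ n ih =>
          show (t (transRun t q0 B n) (B n)).1 = _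
          rw [ih, step n]
    intro n
    show (t (transRun t q0 B n) (B n)).2 = A n
    rw [key n, step n]
end

section
/- There exists an infinite string A over the alphabet Σ = {0, ..., k} such that for every deterministic transducer M with input alphabet Γ = {0, ..., k-1} and output alphabet Σ, and every infinite string B over Γ, M[B] ≠ A. -/
open Classical

namespace Diag

lemma transRun_congr {Q Γ S : Type*} (t : Q → Γ → Q × S) (q : Q) {B B' : ℕ → Γ} :
    ∀ {n : ℕ}, (∀ j < n, B j = B' j) → transRun t q B n = transRun t q B' n
  | 0, _ => rfl
  | n + 1, h => by
      simp only [transRun]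
      rw [transRun_congr t q (fun j hj => h j (Nat.lt_succ_of_lt hj)), h n (Nat.lt_succ_self n)]

lemma transOut_congr {Q Γ S : Type*} (t : Q → Γ → Q × S) (q : Q) {B B' : ℕ → Γ} {n : ℕ}
    (h : ∀ j ≤ n, B j = B' j) : transOut t q B n = transOut t q B' n := by
  unfold transOut
  rw [transRun_congr t q (fun j hj => h j (le_of_lt hj)), h n le_rfl]

lemma transRun_add {Q Γ S : Type*} (t : Q → Γ → Q × S) (q : Q) (B : ℕ → Γ) (L : ℕ) :
    ∀ i : ℕ, transRun t q B (L + i) = transRun t (transRun t q B L) (fun n => B (L + n)) i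
  | 0 => rfl
  | i + 1 => by
      show (t (transRun t q B (L + i)) (B (L + i))).1
        = (t (transRun t (transRun t q B L) (fun n => B (L + n)) i) (B (L + i))).1
      rw [transRun_add t q B L i]

lemma transOut_add {Q Γ S : Type*} (t : Q → Γ → Q × S) (q : Q) (B : ℕ → Γ) (L i : ℕ) :
    transOut t q B (L + i) = transOut t (transRun t q B L) (fun n => B (L + n)) i := by
  unfold transOut
  rw [transRun_add]

lemma pow_aux (k : ℕ) : ∀ m : ℕ, k ^ m * (k + m) ≤ k * (k + 1) ^ m
  | 0 => by simp
  | m + 1 => by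
      have ih := pow_aux k m
      have h1 : k ^ (m + 1) * (k + (m + 1)) = k * (k ^ m * (k + m)) + k ^ (m + 1) := by ring
      have h2 : k ^ (m + 1) ≤ k ^ m * (k + m) := by
        rw [pow_succ]
        exact Nat.mul_le_mul_left _ (Nat.le_add_right _ _)
      calc k ^ (m + 1) * (k + (m + 1)) = k * (k ^ m * (k + m)) + k ^ (m + 1) := h1
        _ ≤ k * (k ^ m * (k + m)) + k ^ m * (k + m) := by omega
        _ = (k + 1) * (k ^ m * (k + m)) := by ring
        _ ≤ (k + 1) * (k * (k + 1) ^ m) := Nat.mul_le_mul_left _ ih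
        _ = k * (k + 1) ^ (m + 1) := by ring

lemma pow_ineq (k c : ℕ) : ∃ m : ℕ, 0 < m ∧ c * k ^ m < (k + 1) ^ m := by
  refine ⟨c * k + 1, Nat.succ_pos _, ?_⟩
  rcases Nat.eq_zero_or_pos k with hk | hk
  · subst hk; simp
  · have h := pow_aux k (c * k + 1)
    have hkm : 1 ≤ k ^ (c * k + 1) := Nat.one_le_pow _ _ hk
    have : k * (c * k ^ (c * k + 1)) < k * ((k + 1) ^ (c * k + 1)) := by nlinarith
    exact Nat.lt_of_mul_lt_mul_left this

lemma exists_block {k : ℕ} (Q : Type) [Fintype Q] (t : Q → Fin k → Q × Fin (k + 1)) :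
    ∃ m : ℕ, 0 < m ∧ ∃ u : Fin m → Fin (k + 1),
      ∀ (q : Q) (B : ℕ → Fin k), ¬ ∀ i : Fin m, transOut t q B i.val = u i := by
  obtain ⟨m, hm, hlt⟩ := pow_ineq k (Fintype.card Q)
  refine ⟨m, hm, ?_⟩
  by_contra h
  push_neg at h
  -- h : ∀ u, ∃ q B, ∀ i, transOut t q B i = u i
  have hF : ∀ u : Fin m → Fin (k + 1), ∃ p : Q × (ℕ → Fin k),
      ∀ i : Fin m, transOut t p.1 p.2 i.val = u i := by
    intro u; obtain ⟨q, B, hu⟩ := h u; exact ⟨(q, B), hu⟩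
  choose p hp using hF
  have hinj : Function.Injective
      (fun u : Fin m → Fin (k + 1) => ((p u).1, fun i : Fin m => (p u).2 i.val)) := by
    intro u u' huv
    dsimp only at huv
    have h1 := congrArg Prod.fst huv
    have h2 := congrArg Prod.snd huv
    dsimp only at h1 h2
    funext i
    rw [← hp u i, ← hp u' i, h1]
    exact transOut_congr t (p u').1 (fun j hj => by
      have hjm : j < m := lt_of_le_of_lt hj i.isLt
      exact congrFun h2 ⟨j, hjm⟩)
  have hcard := Fintype.card_le_of_injective _ hinj
  simp [Fintype.card_fun] at hcard
  omega

abbrev Mach (k : ℕ) : Type := Σ n : ℕ, (Fin n → Fin k → Fin n × Fin (k + 1)) × Fin n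

instance (k : ℕ) : Nonempty (Mach k) := ⟨⟨1, fun _ _ => (0, 0), 0⟩⟩

noncomputable def enum (k : ℕ) : ℕ → Mach k := (exists_surjective_nat (Mach k)).choose

lemma enum_surj (k : ℕ) : Function.Surjective (enum k) :=
  (exists_surjective_nat (Mach k)).choose_spec

lemma mach_block {k : ℕ} (M : Mach k) :
    ∃ m : ℕ, 0 < m ∧ ∃ u : Fin m → Fin (k + 1),
      ∀ (q : Fin M.1) (B : ℕ → Fin k), ¬ ∀ i : Fin m, transOut M.2.1 q B i.val = u i :=
  exists_block _ M.2.1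

noncomputable def blen {k : ℕ} (M : Mach k) : ℕ := (mach_block M).choose

lemma blen_pos {k : ℕ} (M : Mach k) : 0 < blen M := (mach_block M).choose_spec.1

noncomputable def bstr {k : ℕ} (M : Mach k) : Fin (blen M) → Fin (k + 1) :=
  (mach_block M).choose_spec.2.choose

lemma bstr_spec {k : ℕ} (M : Mach k) (q : Fin M.1) (B : ℕ → Fin k) :
    ¬ ∀ i : Fin (blen M), transOut M.2.1 q B i.val = bstr M i :=
  (mach_block M).choose_spec.2.choose_spec q B

noncomputable def Lpos (k : ℕ) : ℕ → ℕ
  | 0 => 0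
  | j + 1 => Lpos k j + blen (enum k j)

lemma Lpos_ge (k : ℕ) : ∀ j : ℕ, j ≤ Lpos k j
  | 0 => le_rfl
  | j + 1 => by
      have := Lpos_ge k j
      have := blen_pos (enum k j)
      simp only [Lpos]; omega

noncomputable def W (k : ℕ) : ℕ → List (Fin (k + 1))
  | 0 => []
  | j + 1 => W k j ++ List.ofFn (bstr (enum k j))

lemma W_length (k : ℕ) : ∀ j : ℕ, (W k j).length = Lpos k j
  | 0 => rfl
  | j + 1 => by simp [W, Lpos, W_length k j]

lemma W_prefix (k : ℕ) {j j' : ℕ} (h : j ≤ j') : W k j <+: W k j' := by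
  induction h with
  | refl => exact List.prefix_rfl
  | step h ih => exact ih.trans (List.prefix_append _ _)

noncomputable def A (k : ℕ) (n : ℕ) : Fin (k + 1) := (W k (n + 1)).getD n 0

lemma A_block {k : ℕ} (j : ℕ) (i : Fin (blen (enum k j))) :
    A k (Lpos k j + i.val) = bstr (enum k j) i := by
  set n := Lpos k j + i.val with hn
  have h1 : n < (W k (j + 1)).length := by
    rw [W_length]; simp only [Lpos, hn]; omega
  have hjn : j + 1 ≤ n + 1 := by
    have := Lpos_ge k j; omega
  have hpre : W k (j + 1) <+: W k (n + 1) := W_prefix k hjn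
  have h2 : n < (W k (n + 1)).length := by
    rw [W_length]
    have := Lpos_ge k (n + 1); omega
  rw [A, List.getD_eq_getElem _ _ h2, ← hpre.getElem h1]
  show (W k j ++ List.ofFn (bstr (enum k j)))[n]'(by rw [List.length_append, List.length_ofFn, W_length]; omega) = _
  rw [List.getElem_append_right (by rw [W_length]; omega), List.getElem_ofFn]
  exact congrArg _ (Fin.ext (by simp [W_length]; omega))

lemma kill {k : ℕ} (j : ℕ) (q : Fin (enum k j).1) (B : ℕ → Fin k)
    (h : ∀ i : ℕ, transOut (enum k j).2.1 q B i = A k (Lpos k j + i)) : False :=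
  bstr_spec (enum k j) q B (fun i => (h i.val).trans (A_block j i))

end Diag

/-- There is an infinite string `A` over `{0,…,k}` which is not the output of any
deterministic transducer with input alphabet `{0,…,k-1}` on any input. -/
theorem diagonal_string_not_transducer_output (k : ℕ) :
    ∃ A : ℕ → Fin (k + 1),
      ∀ (Q : Type) [Fintype Q] (t : Q → Fin k → Q × Fin (k + 1)) (q0 : Q)
        (B : ℕ → Fin k), ¬ ∀ n : ℕ, transOut t q0 B n = A n := by
  refine ⟨Diag.A k, ?_⟩
  intro Q _ t q0 B h
  set N := Fintype.card Q with hN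
  set eQ : Q ≃ Fin N := Fintype.equivFin Q with heQ
  set t' : Fin N → Fin k → Fin N × Fin (k + 1) :=
    fun p a => (eQ (t (eQ.symm p) a).1, (t (eQ.symm p) a).2) with ht'
  have hrun : ∀ n, transRun t' (eQ q0) B n = eQ (transRun t q0 B n) := by
    intro n
    induction n with
    | zero => rfl
    | succ n ih => simp only [transRun, ih]; simp [ht', Equiv.symm_apply_apply]
  have hout : ∀ n, transOut t' (eQ q0) B n = transOut t q0 B n := by
    intro n
    simp only [transOut, hrun]; simp [ht', Equiv.symm_apply_apply]
  obtain ⟨j, hj⟩ := Diag.enum_surj k ⟨N, t', eQ q0⟩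
  have hP : ∃ (q : Fin ((⟨N, t', eQ q0⟩ : Diag.Mach k)).1) (B' : ℕ → Fin k),
      ∀ i : ℕ, transOut ((⟨N, t', eQ q0⟩ : Diag.Mach k)).2.1 q B' i
        = Diag.A k (Diag.Lpos k j + i) := by
    refine ⟨transRun t' (eQ q0) B (Diag.Lpos k j), fun n => B (Diag.Lpos k j + n), fun i => ?_⟩
    show transOut t' (transRun t' (eQ q0) B (Diag.Lpos k j)) (fun n => B (Diag.Lpos k j + n)) i
      = Diag.A k (Diag.Lpos k j + i)
    rw [← Diag.transOut_add, hout, h]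
  rw [← hj] at hP
  obtain ⟨q, B', hq⟩ := hP
  exact Diag.kill j q B' hq
end

section
/- For every deterministic transducer M with finite state set Q, input alphabet Γ of size k and output alphabet Σ of size k+1, there exists a finite string u_M ∈ Σ* of length at most |Q| such that u_M is not a substring of M[B] for any infinite input B ∈ Γ^ω. -/
open Classical

theorem avoided_substring_aux (k : ℕ) (Q : Type) [Fintype Q]
    (t : Q → Fin k → Q × Fin (k + 1)) :
    ∀ (n : ℕ) (S : Finset Q), S.card ≤ n →
      ∃ u : List (Fin (k + 1)), u.length ≤ S.card ∧
        ∀ (B : ℕ → Fin k) (q : Q) (m : ℕ), transRun t q B m ∈ S →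
          ¬ ∀ i : Fin u.length, transOut t q B (m + i) = u.get i := by
  classical
  intro n
  induction n with
  | zero =>
    intro S hS
    refine ⟨[], by simp, ?_⟩
    intro B q m hmem _
    have : S = ∅ := Finset.card_eq_zero.mp (Nat.le_zero.mp hS)
    rw [this] at hmem
    exact absurd hmem (Finset.notMem_empty _)
  | succ n ih =>
    intro S hS
    rcases eq_or_ne S ∅ with rfl | hne
    · exact ⟨[], by simp, fun B q m hmem _ => absurd hmem (Finset.notMem_empty _)⟩
    · have hSpos : 0 < S.card := Finset.card_pos.mpr (Finset.nonempty_of_ne_empty hne)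
      -- counting: some output character a occurs < S.card times
      have hsum : ∑ a : Fin (k + 1),
          ((S ×ˢ (Finset.univ : Finset (Fin k))).filter
            (fun p => (t p.1 p.2).2 = a)).card = S.card * k := by
        rw [← Finset.card_eq_sum_card_fiberwise (fun p _ => Finset.mem_univ ((t p.1 p.2).2))]
        simp [Finset.card_product]
      have hex : ∃ a : Fin (k + 1),
          ((S ×ˢ (Finset.univ : Finset (Fin k))).filter
            (fun p => (t p.1 p.2).2 = a)).card < S.card := by
        by_contra hcon
        push_neg at hcon
        have : (k + 1) * S.card ≤ ∑ a : Fin (k + 1),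
            ((S ×ˢ (Finset.univ : Finset (Fin k))).filter
              (fun p => (t p.1 p.2).2 = a)).card := by
          calc (k + 1) * S.card = ∑ _a : Fin (k + 1), S.card := by
                simp [mul_comm]
            _ ≤ _ := Finset.sum_le_sum (fun a _ => hcon a)
        rw [hsum] at this
        nlinarith
      obtain ⟨a, ha⟩ := hex
      set F := (S ×ˢ (Finset.univ : Finset (Fin k))).filter
          (fun p => (t p.1 p.2).2 = a) with hF
      set S' : Finset Q := F.image (fun p => (t p.1 p.2).1) with hS'
      have hcard' : S'.card < S.card :=
        lt_of_le_of_lt (Finset.card_image_le) ha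
      obtain ⟨u', hu'len, hu'⟩ := ih S' (by omega)
      refine ⟨a :: u', by simpa using Nat.succ_le_of_lt (lt_of_le_of_lt hu'len hcard'), ?_⟩
      intro B q m hmem h
      have h0 : (t (transRun t q B m) (B m)).2 = a := h ⟨0, Nat.succ_pos _⟩
      have hmem' : transRun t q B (m + 1) ∈ S' := by
        rw [hS']
        refine Finset.mem_image.mpr ⟨(transRun t q B m, B m), ?_, rfl⟩
        rw [hF]
        exact Finset.mem_filter.mpr ⟨Finset.mem_product.mpr ⟨hmem, Finset.mem_univ _⟩, h0⟩
      refine hu' B q (m + 1) hmem' ?_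
      intro i
      have := h ⟨i + 1, by simpa using i.isLt⟩
      simpa [Nat.add_assoc, Nat.add_comm 1 (i : ℕ)] using this

/-- For every deterministic transducer with input alphabet of size `k` and output
alphabet of size `k+1`, there is a string `u_M` of length at most `|Q|` that is
not a substring of the output on any infinite input. -/
theorem avoided_substring_for_transducer (k : ℕ) (Q : Type) [Fintype Q]
    (t : Q → Fin k → Q × Fin (k + 1)) (q0 : Q) :
    ∃ u : List (Fin (k + 1)), u.length ≤ Fintype.card Q ∧
      ∀ (B : ℕ → Fin k) (m : ℕ),
        ¬ ∀ i : Fin u.length, transOut t q0 B (m + i) = u.get i := by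
  obtain ⟨u, hlen, hu⟩ := avoided_substring_aux k Q t (Fintype.card Q)
    (Finset.univ : Finset Q) (le_of_eq (Finset.card_univ))
  exact ⟨u, by simpa using hlen, fun B m => hu B q0 m (Finset.mem_univ _)⟩
end
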